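/- Let λ ≤ ω and let E and F be real vector spaces equipped with separating seminorm families (P_k)_{k<λ} and (Q_k)_{k<λ} of the same length λ, such that E and F are each separable and complete with respect to the topology induced by their seminorm family (i.e. they are separable Fréchet spaces with fundamental systems of seminorms (P_k) and (Q_k)). Assume both E and F are approximately ultrahomogeneous, and that their ages are equivalent: for every finite-dimensional subspace X ⊆ E and every l ≤ λ with l < ω or l = λ, there is an injective linear map φ : X → F with Q_k(φ(x)) = P_k(x) for all x ∈ X and k < l, and symmetrically with the roles of E and F exchanged. Then E and F are multi-isometric: there exists a linear bijection T : E → F with Q_k(T(x)) = P_k(x) for all x ∈ E and all k < λ. -/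

import Mathlib

set_option maxHeartbeats 1600000


/-- Approximate ultrahomogeneity of a space `E` with a separating seminorm family
`(P k)_{k < lam}`, `lam ≤ ω` (`lam : ℕ∞`, with only the seminorms `P k` for
`(k : ℕ∞) < lam` regarded as part of the structure). -/
def ApproxUltraHomog (E : Type) [AddCommGroup E] [Module ℝ E]
    (P : ℕ → Seminorm ℝ E) (lam : ℕ∞) : Prop :=
  ∀ X : Submodule ℝ E, FiniteDimensional ℝ X →
    ∀ l : ℕ∞, l ≤ lam →
    ∀ γ η : X →ₗ[ℝ] E, Function.Injective γ → Function.Injective η →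
    (∀ k : ℕ, (k : ℕ∞) < l → ∀ x : X, P k (γ x) = P k (x : E)) →
    (∀ k : ℕ, (k : ℕ∞) < l → ∀ x : X, P k (η x) = P k (x : E)) →
    ∀ ε : ℝ, 0 < ε →
    ∃ g : E ≃ₗ[ℝ] E, (∀ k : ℕ, (k : ℕ∞) < lam → ∀ y : E, P k (g y) = P k y) ∧
      ∀ k : ℕ, (k : ℕ∞) < l → ∀ x : X, P k (x : E) ≤ 1 → P k (g (γ x) - η x) ≤ ε

namespace Stmt7


lemma sm_scale {V W : Type*} [AddCommGroup V] [Module ℝ V] [AddCommGroup W] [Module ℝ W]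
    (p : Seminorm ℝ V) (q : Seminorm ℝ W) (L : V →ₗ[ℝ] W) {ε : ℝ}
    (h : ∀ v, p v ≤ 1 → q (L v) ≤ ε) (v : V) : q (L v) ≤ ε * p v := by
  have hε : 0 ≤ ε := by have := h 0 (by simp); simpa using this
  rcases (apply_nonneg p v).eq_or_lt with h0 | h0
  · have hz : q (L v) = 0 := by
      by_contra hq
      have hq' : 0 < q (L v) := (apply_nonneg q _).lt_of_ne (Ne.symm hq)
      obtain ⟨n, hn⟩ := Archimedean.arch ε hq'
      have hv' : p (((n : ℝ)+1) • v) ≤ 1 := by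
        rw [map_smul_eq_mul, ← h0, mul_zero]; norm_num
      have h2 := h _ hv'
      rw [map_smul, map_smul_eq_mul, Real.norm_eq_abs,
        abs_of_nonneg (by positivity : (0:ℝ) ≤ (n:ℝ)+1)] at h2
      have hn' : ε ≤ (n : ℝ) * q (L v) := by
        simpa [nsmul_eq_mul] using hn
      nlinarith
    rw [hz, ← h0, mul_zero]
  · have h1 : p ((p v)⁻¹ • v) ≤ 1 := by
      rw [map_smul_eq_mul, Real.norm_eq_abs, abs_of_nonneg (inv_nonneg.2 h0.le),
        inv_mul_cancel₀ (ne_of_gt h0)]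
    have h2 := h _ h1
    rw [map_smul, map_smul_eq_mul, Real.norm_eq_abs, abs_of_nonneg (inv_nonneg.2 h0.le)] at h2
    calc q (L v) = p v * ((p v)⁻¹ * q (L v)) := by field_simp
    _ ≤ p v * ε := by nlinarith [apply_nonneg p v]
    _ = ε * p v := mul_comm _ _

section Tends

variable {V : Type*} [AddCommGroup V] [Module ℝ V]

/-- Convergence with respect to the seminorm family below `lam`. -/
def STends (R : ℕ → Seminorm ℝ V) (lam : ℕ∞) (u : ℕ → V) (y : V) : Prop :=
  ∀ k : ℕ, (k : ℕ∞) < lam → ∀ ε : ℝ, 0 < ε → ∃ N, ∀ i, N ≤ i → R k (u i - y) ≤ ε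

variable {R : ℕ → Seminorm ℝ V} {lam : ℕ∞}

lemma stends_const (y : V) : STends R lam (fun _ => y) y := by
  intro k _ ε hε; exact ⟨0, fun i _ => by simp [hε.le]⟩

lemma stends_add {u v : ℕ → V} {y z : V} (hu : STends R lam u y) (hv : STends R lam v z) :
    STends R lam (fun i => u i + v i) (y + z) := by
  intro k hk ε hε
  obtain ⟨N₁, h₁⟩ := hu k hk (ε/2) (by positivity)
  obtain ⟨N₂, h₂⟩ := hv k hk (ε/2) (by positivity)
  refine ⟨max N₁ N₂, fun i hi => ?_⟩
  have e1 := h₁ i (le_trans (le_max_left _ _) hi)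
  have e2 := h₂ i (le_trans (le_max_right _ _) hi)
  have : u i + v i - (y + z) = (u i - y) + (v i - z) := by abel
  rw [this]
  calc R k _ ≤ R k (u i - y) + R k (v i - z) := map_add_le_add _ _ _
  _ ≤ ε := by linarith

lemma stends_smul {u : ℕ → V} {y : V} (r : ℝ) (hu : STends R lam u y) :
    STends R lam (fun i => r • u i) (r • y) := by
  intro k hk ε hε
  obtain ⟨N, h⟩ := hu k hk (ε / (|r| + 1)) (by positivity)
  refine ⟨N, fun i hi => ?_⟩
  have := h i hi
  have h2 : R k (r • u i - r • y) = |r| * R k (u i - y) := by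
    rw [← smul_sub, map_smul_eq_mul, Real.norm_eq_abs]
  rw [h2]
  have habs : (0:ℝ) ≤ |r| := abs_nonneg r
  calc |r| * R k (u i - y) ≤ |r| * (ε / (|r| + 1)) := by
        exact mul_le_mul_of_nonneg_left this habs
  _ ≤ ε := by
        rw [div_eq_inv_mul, ← mul_assoc]
        have : |r| * (|r| + 1)⁻¹ ≤ 1 := by
          rw [mul_inv_le_iff₀ (by positivity)]; linarith
        nlinarith

lemma stends_congr {u v : ℕ → V} {y : V} {M : ℕ} (huv : ∀ i, M ≤ i → u i = v i)
    (hu : STends R lam u y) : STends R lam v y := by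
  intro k hk ε hε
  obtain ⟨N, h⟩ := hu k hk ε hε
  exact ⟨max N M, fun i hi => by
    rw [← huv i (le_trans (le_max_right _ _) hi)]
    exact h i (le_trans (le_max_left _ _) hi)⟩

/-- Distance estimate through limits. -/
lemma stends_le {u : ℕ → V} {y w : V} {k : ℕ} {M : ℕ} {C : ℝ}
    (hu : STends R lam u y) (hk : (k : ℕ∞) < lam)
    (hC : ∀ i, M ≤ i → R k (u i - w) ≤ C) : R k (y - w) ≤ C := by
  refine le_of_forall_pos_le_add (fun ε hε => ?_)
  obtain ⟨N, h⟩ := hu k hk ε hε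
  set i := max N M
  have h1 := h i (le_max_left _ _)
  have h2 := hC i (le_max_right _ _)
  have : y - w = -(u i - y) + (u i - w) := by abel
  rw [this]
  calc R k _ ≤ R k (-(u i - y)) + R k (u i - w) := map_add_le_add _ _ _
  _ = R k (u i - y) + R k (u i - w) := by rw [map_neg_eq_map]
  _ ≤ C + ε := by linarith

lemma stends_norm_const {u : ℕ → V} {y : V} {k : ℕ} {M : ℕ} {c : ℝ}
    (hu : STends R lam u y) (hk : (k : ℕ∞) < lam)
    (hc : ∀ i, M ≤ i → R k (u i) = c) : R k y = c := by
  have h1 : R k y ≤ c := by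
    refine le_of_forall_pos_le_add (fun ε hε => ?_)
    obtain ⟨N, h⟩ := hu k hk ε hε
    set i := max N M
    have e1 := h i (le_max_left _ _)
    have e2 := hc i (le_max_right _ _)
    calc R k y = R k (-(u i - y) + u i) := by congr 1; abel
    _ ≤ R k (-(u i - y)) + R k (u i) := map_add_le_add _ _ _
    _ = R k (u i - y) + c := by rw [map_neg_eq_map, e2]
    _ ≤ c + ε := by linarith
  have h2 : c ≤ R k y := by
    refine le_of_forall_pos_le_add (fun ε hε => ?_)
    obtain ⟨N, h⟩ := hu k hk ε hε
    set i := max N M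
    have e1 := h i (le_max_left _ _)
    have e2 := hc i (le_max_right _ _)
    calc c = R k (u i) := e2.symm
    _ = R k ((u i - y) + y) := by congr 1; abel
    _ ≤ R k (u i - y) + R k y := map_add_le_add _ _ _
    _ ≤ R k y + ε := by linarith
  linarith

end Tends


section Tends
variable {V : Type*} [AddCommGroup V] [Module ℝ V]
variable {R : ℕ → Seminorm ℝ V} {lam : ℕ∞}

lemma stends_sub {u v : ℕ → V} {y z : V} (hu : STends R lam u y) (hv : STends R lam v z) :
    STends R lam (fun i => u i - v i) (y - z) := by
  intro k hk ε hε
  obtain ⟨N₁, h₁⟩ := hu k hk (ε/2) (by positivity)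
  obtain ⟨N₂, h₂⟩ := hv k hk (ε/2) (by positivity)
  refine ⟨max N₁ N₂, fun i hi => ?_⟩
  have e1 := h₁ i (le_trans (le_max_left _ _) hi)
  have e2 := h₂ i (le_trans (le_max_right _ _) hi)
  have hre : u i - v i - (y - z) = (u i - y) + -(v i - z) := by abel
  rw [hre]
  calc R k _ ≤ R k (u i - y) + R k (-(v i - z)) := map_add_le_add _ _ _
  _ = R k (u i - y) + R k (v i - z) := by rw [map_neg_eq_map]
  _ ≤ ε := by linarith

lemma stends_close {u v : ℕ → V} {y z : V} (hu : STends R lam u y) (hv : STends R lam v z)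
    (huv : ∀ k : ℕ, (k : ℕ∞) < lam → ∀ ε : ℝ, 0 < ε → ∃ N, ∀ i, N ≤ i → R k (u i - v i) ≤ ε) :
    ∀ k : ℕ, (k : ℕ∞) < lam → R k (y - z) = 0 := by
  intro k hk
  refine le_antisymm ?_ (apply_nonneg _ _)
  have : ∀ ε : ℝ, 0 < ε → R k (y - z) ≤ ε := by
    intro ε hε
    obtain ⟨N₁, h₁⟩ := hu k hk (ε/3) (by positivity)
    obtain ⟨N₂, h₂⟩ := hv k hk (ε/3) (by positivity)
    obtain ⟨N₃, h₃⟩ := huv k hk (ε/3) (by positivity)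
    set i := max N₁ (max N₂ N₃)
    have e1 := h₁ i (le_max_left _ _)
    have e2 := h₂ i (le_trans (le_max_left _ _) (le_max_right _ _))
    have e3 := h₃ i (le_trans (le_max_right _ _) (le_max_right _ _))
    have hre : y - z = -(u i - y) + (u i - v i) + (v i - z) := by abel
    rw [hre]
    calc R k _ ≤ R k (-(u i - y) + (u i - v i)) + R k (v i - z) := map_add_le_add _ _ _
    _ ≤ R k (-(u i - y)) + R k (u i - v i) + R k (v i - z) :=
        add_le_add_left (map_add_le_add _ _ _) _
    _ = R k (u i - y) + R k (u i - v i) + R k (v i - z) := by rw [map_neg_eq_map]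
    _ ≤ ε := by linarith
  by_contra hlt
  push_neg at hlt
  exact absurd (this _ (half_pos (lt_of_not_ge (fun hc => hlt.not_ge (le_trans hc (by linarith [apply_nonneg (R k) (y-z)]))))) ) (by
    intro hcon
    nlinarith [apply_nonneg (R k) (y - z)])
end Tends



variable {E F : Type} [AddCommGroup E] [Module ℝ E] [AddCommGroup F] [Module ℝ F]

/-- Partial map application: apply the partial isometry `p` to `x ∈ E` (0 outside domain). -/
noncomputable def ap (p : (X : Submodule ℝ E) × (X →ₗ[ℝ] F)) (x : E) : F :=
  letI := Classical.dec (x ∈ p.1)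
  if h : x ∈ p.1 then p.2 ⟨x, h⟩ else 0

lemma ap_mem (p : (X : Submodule ℝ E) × (X →ₗ[ℝ] F)) {x : E} (h : x ∈ p.1) :
    ap p x = p.2 ⟨x, h⟩ := by
  simp only [ap]
  exact dif_pos h

lemma ap_add (p : (X : Submodule ℝ E) × (X →ₗ[ℝ] F)) {x y : E}
    (hx : x ∈ p.1) (hy : y ∈ p.1) : ap p (x + y) = ap p x + ap p y := by
  rw [ap_mem p hx, ap_mem p hy, ap_mem p (add_mem hx hy), ← map_add]
  congr 1

lemma ap_smul (p : (X : Submodule ℝ E) × (X →ₗ[ℝ] F)) {x : E} (r : ℝ)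
    (hx : x ∈ p.1) : ap p (r • x) = r • ap p x := by
  rw [ap_mem p hx, ap_mem p (Submodule.smul_mem _ r hx), ← map_smul]
  congr 1

lemma ap_sub (p : (X : Submodule ℝ E) × (X →ₗ[ℝ] F)) {x y : E}
    (hx : x ∈ p.1) (hy : y ∈ p.1) : ap p (x - y) = ap p x - ap p y := by
  rw [ap_mem p hx, ap_mem p hy, ap_mem p (sub_mem hx hy), ← map_sub]
  congr 1

/-- A good partial isometry. -/
def Good (lam : ℕ∞) (P : ℕ → Seminorm ℝ E) (Q : ℕ → Seminorm ℝ F)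
    (p : (X : Submodule ℝ E) × (X →ₗ[ℝ] F)) : Prop :=
  FiniteDimensional ℝ p.1 ∧ Function.Injective p.2 ∧
    ∀ k : ℕ, (k : ℕ∞) < lam → ∀ x : p.1, Q k (p.2 x) = P k (x : E)

lemma ap_isom {lam : ℕ∞} {P : ℕ → Seminorm ℝ E} {Q : ℕ → Seminorm ℝ F}
    {p : (X : Submodule ℝ E) × (X →ₗ[ℝ] F)} (hp : Good lam P Q p) {x : E}
    (hx : x ∈ p.1) {k : ℕ} (hk : (k : ℕ∞) < lam) : Q k (ap p x) = P k x := by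
  rw [ap_mem p hx]; exact hp.2.2 k hk ⟨x, hx⟩

lemma step {lam : ℕ∞} {P : ℕ → Seminorm ℝ E} {Q : ℕ → Seminorm ℝ F}
    (hEauh : ApproxUltraHomog E P lam) (hFauh : ApproxUltraHomog F Q lam)
    (hEF : ∀ X : Submodule ℝ E, FiniteDimensional ℝ X →
      ∀ l : ℕ∞, l ≤ lam → (l < ⊤ ∨ l = lam) →
      ∃ φ : X →ₗ[ℝ] F, Function.Injective φ ∧
        ∀ k : ℕ, (k : ℕ∞) < l → ∀ x : X, Q k (φ x) = P k (x : E))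
    (hFE : ∀ Y : Submodule ℝ F, FiniteDimensional ℝ Y →
      ∀ l : ℕ∞, l ≤ lam → (l < ⊤ ∨ l = lam) →
      ∃ ψ : Y →ₗ[ℝ] E, Function.Injective ψ ∧
        ∀ k : ℕ, (k : ℕ∞) < l → ∀ y : Y, P k (ψ y) = Q k (y : F))
    (p : (X : Submodule ℝ E) × (X →ₗ[ℝ] F)) (hp : Good lam P Q p)
    (a : E) (b : F) {ε : ℝ} (hε : 0 < ε) :
    ∃ p' : (X : Submodule ℝ E) × (X →ₗ[ℝ] F), Good lam P Q p' ∧ p.1 ≤ p'.1 ∧ a ∈ p'.1 ∧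
      (∀ k : ℕ, (k : ℕ∞) < lam → ∀ x ∈ p.1, Q k (ap p' x - ap p x) ≤ ε * P k x) ∧
      (∃ z ∈ p'.1, ∀ k : ℕ, (k : ℕ∞) < lam → Q k (ap p' z - b) ≤ ε * Q k b) := by
  obtain ⟨X₀, f₀⟩ := p
  obtain ⟨hfd, hinj, hiso⟩ := hp
  haveI : FiniteDimensional ℝ X₀ := hfd
  -- Y' = range f₀ ⊔ span {b}
  set Y' : Submodule ℝ F := LinearMap.range f₀ ⊔ Submodule.span ℝ {b} with hY'
  haveI : FiniteDimensional ℝ Y' := Submodule.finiteDimensional_sup _ _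
  obtain ⟨ψ, hψinj, hψiso⟩ := hFE Y' inferInstance lam le_rfl (Or.inr rfl)
  -- j : X₀ → Y'
  set j : X₀ →ₗ[ℝ] Y' := LinearMap.codRestrict Y' f₀
    (fun x => le_sup_left (α := Submodule ℝ F) (LinearMap.mem_range_self f₀ x)) with hj
  have hjval : ∀ x : X₀, ((j x : F)) = f₀ x := fun x => rfl
  have hjinj : Function.Injective j := by
    intro x y hxy
    apply hinj
    rw [← hjval x, ← hjval y, hxy]
  -- γ = ψ ∘ j , η = inclusion
  set γ : X₀ →ₗ[ℝ] E := ψ.comp j with hγ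
  have hγval : ∀ x : X₀, γ x = ψ (j x) := fun x => rfl
  have hγinj : Function.Injective γ := hψinj.comp hjinj
  have hγiso : ∀ k : ℕ, (k : ℕ∞) < lam → ∀ x : X₀, P k (γ x) = P k (x : E) := by
    intro k hk x
    rw [hγval, hψiso k hk (j x), hjval, hiso k hk]
  have hηinj : Function.Injective X₀.subtype := Subtype.val_injective
  have hηiso : ∀ k : ℕ, (k : ℕ∞) < lam → ∀ x : X₀, P k (X₀.subtype x) = P k (x : E) :=
    fun _ _ _ => rfl
  obtain ⟨h, hhiso, hhapp⟩ := hEauh X₀ hfd lam le_rfl γ X₀.subtype hγinj hηinj hγiso hηiso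
    (ε/2) (by positivity)
  have hhapp' : ∀ k : ℕ, (k : ℕ∞) < lam → ∀ x : X₀, P k (h (γ x) - (x : E)) ≤ ε/2 * P k (x : E) := by
    intro k hk x
    have := sm_scale ((P k).comp X₀.subtype) (P k)
      ((h.toLinearMap.comp γ) - X₀.subtype) (fun v hv => by
        simpa using hhapp k hk v (by simpa using hv)) x
    simpa using this
  -- θ : Y' → E
  set θ : Y' →ₗ[ℝ] E := h.toLinearMap.comp ψ with hθ
  have hθval : ∀ y : Y', θ y = h (ψ y) := fun y => rfl
  have hθinj : Function.Injective θ := h.injective.comp hψinj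
  have hθiso : ∀ k : ℕ, (k : ℕ∞) < lam → ∀ y : Y', P k (θ y) = Q k (y : F) := by
    intro k hk y
    rw [hθval, hhiso k hk, hψiso k hk]
  -- X₁
  set X₁ : Submodule ℝ E := (LinearMap.range θ ⊔ X₀) ⊔ Submodule.span ℝ {a} with hX₁
  haveI : FiniteDimensional ℝ X₁ := by
    haveI : FiniteDimensional ℝ (LinearMap.range θ ⊔ X₀ : Submodule ℝ E) :=
      Submodule.finiteDimensional_sup _ _
    exact Submodule.finiteDimensional_sup _ _
  have hX₀le : X₀ ≤ X₁ := le_sup_left.trans' le_sup_right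
  have hrangele : LinearMap.range θ ≤ X₁ := le_sup_left.trans' le_sup_left
  obtain ⟨φ, hφinj, hφiso⟩ := hEF X₁ inferInstance lam le_rfl (Or.inr rfl)
  -- κ : Y' → X₁
  set κ : Y' →ₗ[ℝ] X₁ := LinearMap.codRestrict X₁ θ
    (fun y => hrangele (LinearMap.mem_range_self θ y)) with hκ
  have hκval : ∀ y : Y', ((κ y : E)) = θ y := fun y => rfl
  have hκinj : Function.Injective κ := by
    intro x y hxy; apply hθinj; rw [← hκval x, ← hκval y, hxy]
  set η₂ : Y' →ₗ[ℝ] F := φ.comp κ with hη₂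
  have hη₂val : ∀ y : Y', η₂ y = φ (κ y) := fun y => rfl
  have hη₂inj : Function.Injective η₂ := hφinj.comp hκinj
  have hη₂iso : ∀ k : ℕ, (k : ℕ∞) < lam → ∀ y : Y', Q k (η₂ y) = Q k (y : F) := by
    intro k hk y
    rw [hη₂val, hφiso k hk (κ y), hκval, hθiso k hk]
  have hγ₂inj : Function.Injective Y'.subtype := Subtype.val_injective
  have hγ₂iso : ∀ k : ℕ, (k : ℕ∞) < lam → ∀ y : Y', Q k (Y'.subtype y) = Q k (y : F) :=
    fun _ _ _ => rfl
  obtain ⟨g, hgiso, hgapp⟩ := hFauh Y' inferInstance lam le_rfl Y'.subtype η₂ hγ₂inj hη₂inj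
    hγ₂iso hη₂iso (ε/2) (by positivity)
  have hgapp' : ∀ k : ℕ, (k : ℕ∞) < lam → ∀ y : Y',
      Q k (g (y : F) - φ (κ y)) ≤ ε/2 * Q k (y : F) := by
    intro k hk y
    have := sm_scale ((Q k).comp Y'.subtype) (Q k)
      ((g.toLinearMap.comp Y'.subtype) - η₂) (fun v hv => by
        simpa using hgapp k hk v (by simpa using hv)) y
    simpa [hη₂val] using this
  have hgsymm : ∀ k : ℕ, (k : ℕ∞) < lam → ∀ w : F, Q k (g.symm w) = Q k w := by
    intro k hk w
    conv_rhs => rw [← g.apply_symm_apply w]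
    rw [hgiso k hk]
  -- the new map
  set f₁ : X₁ →ₗ[ℝ] F := g.symm.toLinearMap.comp φ with hf₁
  have hf₁val : ∀ x : X₁, f₁ x = g.symm (φ x) := fun x => rfl
  have hf₁inj : Function.Injective f₁ := g.symm.injective.comp hφinj
  have hf₁iso : ∀ k : ℕ, (k : ℕ∞) < lam → ∀ x : X₁, Q k (f₁ x) = P k (x : E) := by
    intro k hk x
    rw [hf₁val, hgsymm k hk, hφiso k hk]
  refine ⟨⟨X₁, f₁⟩, ⟨inferInstance, hf₁inj, hf₁iso⟩, hX₀le,
    le_sup_right (α := Submodule ℝ E) (Submodule.mem_span_singleton_self a), ?_, ?_⟩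
  · -- coherence
    intro k hk x hx
    have hx₁ : x ∈ X₁ := hX₀le hx
    rw [ap_mem ⟨X₁, f₁⟩ hx₁, ap_mem ⟨X₀, f₀⟩ hx]
    set x₀ : X₀ := ⟨x, hx⟩
    set x₁ : X₁ := ⟨x, hx₁⟩
    have key : Q k (f₁ x₁ - f₀ x₀) = Q k (φ x₁ - g (f₀ x₀)) := by
      rw [hf₁val, ← hgiso k hk (g.symm (φ x₁) - f₀ x₀), map_sub, g.apply_symm_apply]
    rw [key]
    have h1 : Q k (φ x₁ - φ (κ (j x₀))) ≤ ε/2 * P k x := by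
      rw [← map_sub, hφiso k hk]
      have hcoe : ((x₁ - κ (j x₀) : X₁) : E) = x - h (γ x₀) := by
        rw [Submodule.coe_sub, hκval, hθval]
        rfl
      rw [hcoe, map_sub_rev]
      exact hhapp' k hk x₀
    have h2 : Q k (φ (κ (j x₀)) - g (f₀ x₀)) ≤ ε/2 * P k x := by
      have hb : (j x₀ : F) = f₀ x₀ := hjval x₀
      have := hgapp' k hk (j x₀)
      rw [hb] at this
      rw [map_sub_rev]
      calc Q k (g (f₀ x₀) - φ (κ (j x₀))) ≤ ε/2 * Q k (f₀ x₀) := this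
      _ = ε/2 * P k x := by rw [hiso k hk x₀]
    calc Q k (φ x₁ - g (f₀ x₀))
        = Q k ((φ x₁ - φ (κ (j x₀))) + (φ (κ (j x₀)) - g (f₀ x₀))) := by congr 1; abel
    _ ≤ Q k (φ x₁ - φ (κ (j x₀))) + Q k (φ (κ (j x₀)) - g (f₀ x₀)) := map_add_le_add _ _ _
    _ ≤ ε/2 * P k x + ε/2 * P k x := add_le_add h1 h2
    _ = ε * P k x := by ring
  · -- hitting b
    have hbY : b ∈ Y' := le_sup_right (α := Submodule ℝ F) (Submodule.mem_span_singleton_self b)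
    set b' : Y' := ⟨b, hbY⟩
    have hzmem : ((κ b' : E)) ∈ X₁ := (κ b').2
    refine ⟨(κ b' : E), hzmem, fun k hk => ?_⟩
    rw [ap_mem ⟨X₁, f₁⟩ hzmem]
    have hsub : (⟨(κ b' : E), hzmem⟩ : X₁) = κ b' := rfl
    rw [hsub]
    have key : Q k (f₁ (κ b') - b) = Q k (φ (κ b') - g b) := by
      rw [hf₁val, ← hgiso k hk (g.symm (φ (κ b')) - b), map_sub, g.apply_symm_apply]
    rw [key, map_sub_rev]
    have := hgapp' k hk b'
    calc Q k (g b - φ (κ b')) ≤ ε/2 * Q k b := this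
    _ ≤ ε * Q k b := by nlinarith [apply_nonneg (Q k) b]


end Stmt7


/-- two separable, complete, approximately ultrahomogeneous spaces with
separating seminorm families of the same length `lam ≤ ω` and equivalent ages
are multi-isometric. -/
theorem stmt_7 {E F : Type} [AddCommGroup E] [Module ℝ E] [AddCommGroup F] [Module ℝ F]
    (lam : ℕ∞)
    (P : ℕ → Seminorm ℝ E) (Q : ℕ → Seminorm ℝ F)
    (hPsep : ∀ x : E, x ≠ 0 → ∃ k : ℕ, (k : ℕ∞) < lam ∧ P k x ≠ 0)
    (hQsep : ∀ y : F, y ≠ 0 → ∃ k : ℕ, (k : ℕ∞) < lam ∧ Q k y ≠ 0)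
    -- separability of E and F in the topology induced by the seminorm family
    (hEsep : ∃ D : Set E, D.Countable ∧ ∀ x : E, ∀ ε : ℝ, 0 < ε → ∀ N : ℕ,
      ∃ d ∈ D, ∀ k < N, (k : ℕ∞) < lam → P k (x - d) < ε)
    (hFsep : ∃ D : Set F, D.Countable ∧ ∀ y : F, ∀ ε : ℝ, 0 < ε → ∀ N : ℕ,
      ∃ d ∈ D, ∀ k < N, (k : ℕ∞) < lam → Q k (y - d) < ε)
    -- completeness of E and F with respect to the seminorm family
    (hEcomp : ∀ u : ℕ → E,
      (∀ ε : ℝ, 0 < ε → ∀ k : ℕ, (k : ℕ∞) < lam →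
        ∃ N, ∀ i j, N ≤ i → N ≤ j → P k (u i - u j) ≤ ε) →
      ∃ x : E, ∀ k : ℕ, (k : ℕ∞) < lam → ∀ ε : ℝ, 0 < ε →
        ∃ N, ∀ i, N ≤ i → P k (u i - x) ≤ ε)
    (hFcomp : ∀ u : ℕ → F,
      (∀ ε : ℝ, 0 < ε → ∀ k : ℕ, (k : ℕ∞) < lam →
        ∃ N, ∀ i j, N ≤ i → N ≤ j → Q k (u i - u j) ≤ ε) →
      ∃ y : F, ∀ k : ℕ, (k : ℕ∞) < lam → ∀ ε : ℝ, 0 < ε →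
        ∃ N, ∀ i, N ≤ i → Q k (u i - y) ≤ ε)
    (hEauh : ApproxUltraHomog E P lam)
    (hFauh : ApproxUltraHomog F Q lam)
    -- equivalence of ages
    (hEF : ∀ X : Submodule ℝ E, FiniteDimensional ℝ X →
      ∀ l : ℕ∞, l ≤ lam → (l < ⊤ ∨ l = lam) →
      ∃ φ : X →ₗ[ℝ] F, Function.Injective φ ∧
        ∀ k : ℕ, (k : ℕ∞) < l → ∀ x : X, Q k (φ x) = P k (x : E))
    (hFE : ∀ Y : Submodule ℝ F, FiniteDimensional ℝ Y →
      ∀ l : ℕ∞, l ≤ lam → (l < ⊤ ∨ l = lam) →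
      ∃ ψ : Y →ₗ[ℝ] E, Function.Injective ψ ∧
        ∀ k : ℕ, (k : ℕ∞) < l → ∀ y : Y, P k (ψ y) = Q k (y : F)) :
    ∃ T : E ≃ₗ[ℝ] F, ∀ k : ℕ, (k : ℕ∞) < lam → ∀ x : E, Q k (T x) = P k x := by
  classical
  -- separation in convenient form
  have sepP : ∀ w : E, (∀ k : ℕ, (k : ℕ∞) < lam → P k w = 0) → w = 0 := by
    intro w hw; by_contra h
    obtain ⟨k, hk, hne⟩ := hPsep w h; exact hne (hw k hk)
  have sepQ : ∀ w : F, (∀ k : ℕ, (k : ℕ∞) < lam → Q k w = 0) → w = 0 := by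
    intro w hw; by_contra h
    obtain ⟨k, hk, hne⟩ := hQsep w h; exact hne (hw k hk)
  -- countable dense enumerations
  obtain ⟨DE, hDEc, hDEd⟩ := hEsep
  have hDEne : DE.Nonempty := by
    obtain ⟨x, hx, -⟩ := hDEd 0 1 one_pos 0; exact ⟨x, hx⟩
  obtain ⟨d, hd⟩ := hDEc.exists_eq_range hDEne
  obtain ⟨DF, hDFc, hDFd⟩ := hFsep
  have hDFne : DF.Nonempty := by
    obtain ⟨x, hx, -⟩ := hDFd 0 1 one_pos 0; exact ⟨x, hx⟩
  obtain ⟨e, he⟩ := hDFc.exists_eq_range hDFne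
  have hdE : ∀ x : E, ∀ ε : ℝ, 0 < ε → ∀ N : ℕ, ∃ m : ℕ,
      ∀ k < N, (k : ℕ∞) < lam → P k (x - d m) < ε := by
    intro x ε hε N
    obtain ⟨z, hz, hzp⟩ := hDEd x ε hε N
    rw [hd] at hz; obtain ⟨m, rfl⟩ := hz; exact ⟨m, hzp⟩
  have heF : ∀ y : F, ∀ ε : ℝ, 0 < ε → ∀ N : ℕ, ∃ m : ℕ,
      ∀ k < N, (k : ℕ∞) < lam → Q k (y - e m) < ε := by
    intro y ε hε N
    obtain ⟨z, hz, hzp⟩ := hDFd y ε hε N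
    rw [he] at hz; obtain ⟨m, rfl⟩ := hz; exact ⟨m, hzp⟩
  -- base partial isometry
  have hGood0 : Stmt7.Good lam P Q ⟨(⊥ : Submodule ℝ E), 0⟩ := by
    refine ⟨inferInstance, fun u v _ => Subsingleton.elim u v, fun k hk x => ?_⟩
    have hx0 : (x : E) = 0 := by
      have := x.2; rwa [Submodule.mem_bot] at this
    simp [hx0]
  -- one construction step
  have hstep : ∀ (S : {p : (X : Submodule ℝ E) × (X →ₗ[ℝ] F) // Stmt7.Good lam P Q p}) (n : ℕ),
      ∃ S' : {p : (X : Submodule ℝ E) × (X →ₗ[ℝ] F) // Stmt7.Good lam P Q p},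
        S.1.1 ≤ S'.1.1 ∧ d n ∈ S'.1.1 ∧
        (∀ k : ℕ, (k : ℕ∞) < lam → ∀ x ∈ S.1.1,
          Q k (Stmt7.ap S'.1 x - Stmt7.ap S.1 x) ≤ (2⁻¹ : ℝ)^n * P k x) ∧
        (∃ z ∈ S'.1.1, ∀ k : ℕ, (k : ℕ∞) < lam →
          Q k (Stmt7.ap S'.1 z - e (Nat.unpair n).1) ≤ (2⁻¹ : ℝ)^n * Q k (e (Nat.unpair n).1)) := by
    intro S n
    obtain ⟨p', hg, h1, h2, h3, h4⟩ := Stmt7.step hEauh hFauh hEF hFE S.1 S.2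
      (d n) (e (Nat.unpair n).1) (pow_pos (by norm_num : (0:ℝ) < 2⁻¹) n)
    exact ⟨⟨p', hg⟩, h1, h2, h3, h4⟩
  choose nxt hn1 hn2 hn3 hn4 using hstep
  obtain ⟨ch, hch1, hch2, hch3, hch4⟩ :
      ∃ ch : ℕ → {p : (X : Submodule ℝ E) × (X →ₗ[ℝ] F) // Stmt7.Good lam P Q p},
        (∀ n, (ch n).1.1 ≤ (ch (n+1)).1.1) ∧ (∀ n, d n ∈ (ch (n+1)).1.1) ∧
        (∀ n, ∀ k : ℕ, (k : ℕ∞) < lam → ∀ x ∈ (ch n).1.1,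
          Q k (Stmt7.ap (ch (n+1)).1 x - Stmt7.ap (ch n).1 x) ≤ (2⁻¹ : ℝ)^n * P k x) ∧
        (∀ n, ∃ z ∈ (ch (n+1)).1.1, ∀ k : ℕ, (k : ℕ∞) < lam →
          Q k (Stmt7.ap (ch (n+1)).1 z - e (Nat.unpair n).1) ≤
            (2⁻¹ : ℝ)^n * Q k (e (Nat.unpair n).1)) := by
    refine ⟨fun n => Nat.rec ⟨⟨(⊥ : Submodule ℝ E), 0⟩, hGood0⟩ (fun n S => nxt S n) n,
      fun n => hn1 _ n, fun n => hn2 _ n, fun n => hn3 _ n, fun n => hn4 _ n⟩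
  have hmono : Monotone (fun n => (ch n).1.1) := monotone_nat_of_le_succ hch1
  have hisom : ∀ (n k : ℕ), (k : ℕ∞) < lam → ∀ x ∈ (ch n).1.1,
      Q k (Stmt7.ap (ch n).1 x) = P k x :=
    fun n k hk x hx => Stmt7.ap_isom (ch n).2 hx hk
  -- telescoping coherence
  have hcohB : ∀ (m k : ℕ), (k : ℕ∞) < lam → ∀ x ∈ (ch m).1.1, ∀ n, m ≤ n →
      Q k (Stmt7.ap (ch n).1 x - Stmt7.ap (ch m).1 x) ≤
        (2*(2⁻¹ : ℝ)^m - 2*(2⁻¹ : ℝ)^n) * P k x := by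
    intro m k hk x hx n hmn
    induction n, hmn using Nat.le_induction with
    | base => simp
    | succ n hmn ih =>
      have h1 := hch3 n k hk x (hmono hmn hx)
      have htri : Q k (Stmt7.ap (ch (n+1)).1 x - Stmt7.ap (ch m).1 x) ≤
          Q k (Stmt7.ap (ch (n+1)).1 x - Stmt7.ap (ch n).1 x) +
          Q k (Stmt7.ap (ch n).1 x - Stmt7.ap (ch m).1 x) := by
        calc Q k (Stmt7.ap (ch (n+1)).1 x - Stmt7.ap (ch m).1 x)
            = Q k ((Stmt7.ap (ch (n+1)).1 x - Stmt7.ap (ch n).1 x) +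
              (Stmt7.ap (ch n).1 x - Stmt7.ap (ch m).1 x)) := by congr 1; abel
        _ ≤ _ := map_add_le_add _ _ _
      have hpow : (2⁻¹:ℝ)^(n+1) = (2⁻¹:ℝ)^n * 2⁻¹ := pow_succ _ _
      have hP : 0 ≤ P k x := apply_nonneg _ _
      nlinarith [ih, h1, htri]
  have hcoh : ∀ (m n : ℕ), m ≤ n → ∀ k : ℕ, (k : ℕ∞) < lam → ∀ x ∈ (ch m).1.1,
      Q k (Stmt7.ap (ch n).1 x - Stmt7.ap (ch m).1 x) ≤ 2*(2⁻¹ : ℝ)^m * P k x := by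
    intro m n hmn k hk x hx
    have := hcohB m k hk x hx n hmn
    have hP : 0 ≤ P k x := apply_nonneg _ _
    have hpn : (0:ℝ) ≤ (2⁻¹:ℝ)^n := by positivity
    nlinarith
  -- T0 : limit map on the union
  have hT0ex : ∀ x : E, ∃ y : F, (∃ m, x ∈ (ch m).1.1) →
      Stmt7.STends Q lam (fun i => Stmt7.ap (ch i).1 x) y := by
    intro x
    by_cases hx : ∃ m, x ∈ (ch m).1.1
    · obtain ⟨m, hm⟩ := hx
      have hcau : ∀ ε : ℝ, 0 < ε → ∀ k : ℕ, (k : ℕ∞) < lam →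
          ∃ N, ∀ i j, N ≤ i → N ≤ j →
            Q k (Stmt7.ap (ch i).1 x - Stmt7.ap (ch j).1 x) ≤ ε := by
        intro ε hε k hk
        have hPx : (0:ℝ) < P k x + 1 := by positivity
        obtain ⟨t, ht⟩ := exists_pow_lt_of_lt_one
          (show (0:ℝ) < ε / (4*(P k x + 1)) by positivity) (by norm_num : (2⁻¹:ℝ) < 1)
        refine ⟨max m t, fun i j hi hj => ?_⟩
        have hmi : m ≤ i := le_trans (le_max_left _ _) hi
        have hmj : m ≤ j := le_trans (le_max_left _ _) hj
        have hNi : max m t ≤ i := hi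
        have hxN : x ∈ (ch (max m t)).1.1 := hmono (le_max_left _ _) hm
        have h1 := hcoh (max m t) i hi k hk x hxN
        have h2 := hcoh (max m t) j hj k hk x hxN
        have htri : Q k (Stmt7.ap (ch i).1 x - Stmt7.ap (ch j).1 x) ≤
            Q k (Stmt7.ap (ch i).1 x - Stmt7.ap (ch (max m t)).1 x) +
            Q k (Stmt7.ap (ch j).1 x - Stmt7.ap (ch (max m t)).1 x) := by
          calc Q k (Stmt7.ap (ch i).1 x - Stmt7.ap (ch j).1 x)
              = Q k ((Stmt7.ap (ch i).1 x - Stmt7.ap (ch (max m t)).1 x) +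
                -(Stmt7.ap (ch j).1 x - Stmt7.ap (ch (max m t)).1 x)) := by congr 1; abel
          _ ≤ Q k (Stmt7.ap (ch i).1 x - Stmt7.ap (ch (max m t)).1 x) +
              Q k (-(Stmt7.ap (ch j).1 x - Stmt7.ap (ch (max m t)).1 x)) := map_add_le_add _ _ _
          _ = _ := by rw [map_neg_eq_map]
        have hple : (2⁻¹:ℝ)^(max m t) ≤ (2⁻¹:ℝ)^t :=
          pow_le_pow_of_le_one (by norm_num) (by norm_num) (le_max_right _ _)
        have hP : 0 ≤ P k x := apply_nonneg _ _
        have : 4 * (2⁻¹:ℝ)^t * (P k x + 1) ≤ 4 * (ε / (4*(P k x + 1))) * (P k x + 1) := by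
          nlinarith
        have h4 : 4 * (ε / (4*(P k x + 1))) * (P k x + 1) = ε := by field_simp
        have hpt : (0:ℝ) ≤ (2⁻¹:ℝ)^(max m t) := by positivity
        have hA : Q k (Stmt7.ap (ch i).1 x - Stmt7.ap (ch j).1 x) ≤
            4*(2⁻¹:ℝ)^(max m t) * (P k x) := by linarith
        have hB : 4*(2⁻¹:ℝ)^(max m t) * (P k x) ≤ 4*(2⁻¹:ℝ)^t * (P k x + 1) := by
          nlinarith [hple, hP, hpt]
        linarith
      obtain ⟨y, hy⟩ := hFcomp _ hcau
      exact ⟨y, fun _ => hy⟩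
    · exact ⟨0, fun h => absurd h hx⟩
  choose T0 hT0 using hT0ex
  -- basic properties of T0
  have hT0iso : ∀ x : E, ∀ m, x ∈ (ch m).1.1 → ∀ k : ℕ, (k : ℕ∞) < lam →
      Q k (T0 x) = P k x := by
    intro x m hm k hk
    exact Stmt7.stends_norm_const (hT0 x ⟨m, hm⟩) hk
      (M := m) (fun i hi => hisom i k hk x (hmono hi hm))
  have uniqQ : ∀ {u : ℕ → F} {y z : F}, Stmt7.STends Q lam u y → Stmt7.STends Q lam u z →
      y = z := by
    intro u y z hy hz
    have h0 := Stmt7.stends_close hy hz (fun k hk ε hε => ⟨0, fun i _ => by simp [hε.le]⟩)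
    have := sepQ _ (fun k hk => h0 k hk)
    exact sub_eq_zero.mp this
  have hT0add : ∀ x y : E, (∃ m, x ∈ (ch m).1.1) → (∃ m, y ∈ (ch m).1.1) →
      T0 (x + y) = T0 x + T0 y := by
    intro x y ⟨m1, h1⟩ ⟨m2, h2⟩
    have hxm : x ∈ (ch (max m1 m2)).1.1 := hmono (le_max_left _ _) h1
    have hym : y ∈ (ch (max m1 m2)).1.1 := hmono (le_max_right _ _) h2
    have ha : Stmt7.STends Q lam (fun i => Stmt7.ap (ch i).1 (x+y)) (T0 (x+y)) :=
      hT0 _ ⟨max m1 m2, add_mem hxm hym⟩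
    have hb : Stmt7.STends Q lam (fun i => Stmt7.ap (ch i).1 x + Stmt7.ap (ch i).1 y)
        (T0 x + T0 y) := Stmt7.stends_add (hT0 x ⟨_, hxm⟩) (hT0 y ⟨_, hym⟩)
    have hc : Stmt7.STends Q lam (fun i => Stmt7.ap (ch i).1 (x+y)) (T0 x + T0 y) :=
      Stmt7.stends_congr (M := max m1 m2)
        (fun i hi => (Stmt7.ap_add (ch i).1 (hmono hi hxm) (hmono hi hym)).symm) hb
    exact uniqQ ha hc
  have hT0smul : ∀ (r : ℝ) (x : E), (∃ m, x ∈ (ch m).1.1) → T0 (r • x) = r • T0 x := by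
    intro r x ⟨m, hm⟩
    have ha : Stmt7.STends Q lam (fun i => Stmt7.ap (ch i).1 (r • x)) (T0 (r • x)) :=
      hT0 _ ⟨m, Submodule.smul_mem _ r hm⟩
    have hb : Stmt7.STends Q lam (fun i => r • Stmt7.ap (ch i).1 x) (r • T0 x) :=
      Stmt7.stends_smul r (hT0 x ⟨m, hm⟩)
    have hc : Stmt7.STends Q lam (fun i => Stmt7.ap (ch i).1 (r • x)) (r • T0 x) :=
      Stmt7.stends_congr (M := m)
        (fun i hi => (Stmt7.ap_smul (ch i).1 r (hmono hi hm)).symm) hb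
    exact uniqQ ha hc
  have hT0sub : ∀ x y : E, (∃ m, x ∈ (ch m).1.1) → (∃ m, y ∈ (ch m).1.1) →
      T0 (x - y) = T0 x - T0 y := by
    intro x y ⟨m1, h1⟩ ⟨m2, h2⟩
    have hxm : x ∈ (ch (max m1 m2)).1.1 := hmono (le_max_left _ _) h1
    have hym : y ∈ (ch (max m1 m2)).1.1 := hmono (le_max_right _ _) h2
    have ha : Stmt7.STends Q lam (fun i => Stmt7.ap (ch i).1 (x-y)) (T0 (x-y)) :=
      hT0 _ ⟨max m1 m2, sub_mem hxm hym⟩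
    have hb : Stmt7.STends Q lam (fun i => Stmt7.ap (ch i).1 x - Stmt7.ap (ch i).1 y)
        (T0 x - T0 y) := Stmt7.stends_sub (hT0 x ⟨_, hxm⟩) (hT0 y ⟨_, hym⟩)
    have hc : Stmt7.STends Q lam (fun i => Stmt7.ap (ch i).1 (x-y)) (T0 x - T0 y) :=
      Stmt7.stends_congr (M := max m1 m2)
        (fun i hi => (Stmt7.ap_sub (ch i).1 (hmono hi hxm) (hmono hi hym)).symm) hb
    exact uniqQ ha hc
  have hT0dist : ∀ x y : E, (∃ m, x ∈ (ch m).1.1) → (∃ m, y ∈ (ch m).1.1) →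
      ∀ k : ℕ, (k : ℕ∞) < lam → Q k (T0 x - T0 y) = P k (x - y) := by
    intro x y hx hy k hk
    rw [← hT0sub x y hx hy]
    obtain ⟨m1, h1⟩ := hx; obtain ⟨m2, h2⟩ := hy
    exact hT0iso _ (max m1 m2) (sub_mem (hmono (le_max_left _ _) h1)
      (hmono (le_max_right _ _) h2)) k hk
  have hT0near : ∀ (n : ℕ) (x : E), x ∈ (ch n).1.1 → ∀ k : ℕ, (k : ℕ∞) < lam →
      Q k (T0 x - Stmt7.ap (ch n).1 x) ≤ 2*(2⁻¹ : ℝ)^n * P k x := by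
    intro n x hx k hk
    exact Stmt7.stends_le (hT0 x ⟨n, hx⟩) hk (M := n)
      (fun i hi => hcoh n i hi k hk x hx)
  -- union membership helper
  have hUadd : ∀ {u v : E}, (∃ m, u ∈ (ch m).1.1) → (∃ m, v ∈ (ch m).1.1) →
      (∃ m, u + v ∈ (ch m).1.1) := by
    rintro u v ⟨m1, h1⟩ ⟨m2, h2⟩
    exact ⟨max m1 m2, add_mem (hmono (le_max_left _ _) h1) (hmono (le_max_right _ _) h2)⟩
  -- approximating sequences from the dense set
  have hcex : ∀ (x : E) (n : ℕ), ∃ z : E, (∃ m, z ∈ (ch m).1.1) ∧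
      ∀ k < n, (k : ℕ∞) < lam → P k (x - z) ≤ (2⁻¹:ℝ)^n := by
    intro x n
    obtain ⟨mi, hmi⟩ := hdE x ((2⁻¹:ℝ)^n) (by positivity) n
    exact ⟨d mi, ⟨mi+1, hch2 mi⟩, fun k hkn hkl => (hmi k hkn hkl).le⟩
  choose c hcU hcP using hcex
  -- T : E → F as the limit of T0 ∘ c
  have hTex : ∀ x : E, ∃ y : F, Stmt7.STends Q lam (fun n => T0 (c x n)) y := by
    intro x
    apply hFcomp
    intro ε hε k hk
    obtain ⟨t, ht⟩ := exists_pow_lt_of_lt_one (half_pos hε) (by norm_num : (2⁻¹:ℝ) < 1)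
    refine ⟨max (k+1) t, fun i j hi hj => ?_⟩
    have hki : k < i := lt_of_lt_of_le (Nat.lt_succ_self k) (le_trans (le_max_left _ _) hi)
    have hkj : k < j := lt_of_lt_of_le (Nat.lt_succ_self k) (le_trans (le_max_left _ _) hj)
    have hQP : Q k (T0 (c x i) - T0 (c x j)) = P k (c x i - c x j) :=
      hT0dist _ _ (hcU x i) (hcU x j) k hk
    rw [hQP]
    have e1 : P k (x - c x i) ≤ (2⁻¹:ℝ)^i := hcP x i k hki hk
    have e2 : P k (x - c x j) ≤ (2⁻¹:ℝ)^j := hcP x j k hkj hk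
    have htri : P k (c x i - c x j) ≤ P k (x - c x i) + P k (x - c x j) := by
      calc P k (c x i - c x j) = P k (-(x - c x i) + (x - c x j)) := by congr 1; abel
      _ ≤ P k (-(x - c x i)) + P k (x - c x j) := map_add_le_add _ _ _
      _ = _ := by rw [map_neg_eq_map]
    have hi' : (2⁻¹:ℝ)^i ≤ (2⁻¹:ℝ)^t :=
      pow_le_pow_of_le_one (by norm_num) (by norm_num) (le_trans (le_max_right _ _) hi)
    have hj' : (2⁻¹:ℝ)^j ≤ (2⁻¹:ℝ)^t :=
      pow_le_pow_of_le_one (by norm_num) (by norm_num) (le_trans (le_max_right _ _) hj)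
    linarith [ht.le]
  choose T hT using hTex
  -- T agrees with T0 on the union
  have hTeq : ∀ z : E, (∃ m, z ∈ (ch m).1.1) → T z = T0 z := by
    intro z hz
    refine uniqQ (hT z) ?_
    intro k hk ε hε
    obtain ⟨t, ht⟩ := exists_pow_lt_of_lt_one hε (by norm_num : (2⁻¹:ℝ) < 1)
    refine ⟨max (k+1) t, fun i hi => ?_⟩
    have hki : k < i := lt_of_lt_of_le (Nat.lt_succ_self k) (le_trans (le_max_left _ _) hi)
    have hQP : Q k (T0 (c z i) - T0 z) = P k (c z i - z) := hT0dist _ _ (hcU z i) hz k hk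
    rw [hQP, map_sub_rev]
    have h1 := hcP z i k hki hk
    have hle : (2⁻¹:ℝ)^i ≤ (2⁻¹:ℝ)^t :=
      pow_le_pow_of_le_one (by norm_num) (by norm_num) (le_trans (le_max_right _ _) hi)
    linarith [ht.le]
  -- T is an isometry
  have hTiso : ∀ k : ℕ, (k : ℕ∞) < lam → ∀ x : E, Q k (T x) = P k x := by
    intro k hk x
    refine le_antisymm ?_ ?_
    · refine le_of_forall_pos_le_add (fun ε hε => ?_)
      obtain ⟨t, ht⟩ := exists_pow_lt_of_lt_one (half_pos hε) (by norm_num : (2⁻¹:ℝ) < 1)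
      obtain ⟨N, hN⟩ := hT x k hk (ε/2) (by positivity)
      set n := max (max (k+1) t) N with hn
      have hkn : k < n :=
        lt_of_lt_of_le (Nat.lt_succ_self k) (le_trans (le_max_left _ _) (le_max_left _ _))
      have h1 : Q k (T0 (c x n) - T x) ≤ ε/2 := hN n (le_max_right _ _)
      obtain ⟨m, hm⟩ := hcU x n
      have h2 : Q k (T0 (c x n)) = P k (c x n) := hT0iso _ m hm k hk
      have h3 : P k (x - c x n) ≤ (2⁻¹:ℝ)^n := hcP x n k hkn hk
      have hle : (2⁻¹:ℝ)^n ≤ (2⁻¹:ℝ)^t := pow_le_pow_of_le_one (by norm_num) (by norm_num)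
        (le_trans (le_max_right _ _) (le_max_left _ _))
      have htr1 : Q k (T x) ≤ Q k (T x - T0 (c x n)) + Q k (T0 (c x n)) := by
        calc Q k (T x) = Q k ((T x - T0 (c x n)) + T0 (c x n)) := by congr 1; abel
        _ ≤ _ := map_add_le_add _ _ _
      have htr2 : P k (c x n) ≤ P k (x - c x n) + P k x := by
        calc P k (c x n) = P k (-(x - c x n) + x) := by congr 1; abel
        _ ≤ P k (-(x - c x n)) + P k x := map_add_le_add _ _ _
        _ = _ := by rw [map_neg_eq_map]
      have hrev : Q k (T x - T0 (c x n)) = Q k (T0 (c x n) - T x) := map_sub_rev _ _ _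
      linarith [ht.le]
    · refine le_of_forall_pos_le_add (fun ε hε => ?_)
      obtain ⟨t, ht⟩ := exists_pow_lt_of_lt_one (half_pos hε) (by norm_num : (2⁻¹:ℝ) < 1)
      obtain ⟨N, hN⟩ := hT x k hk (ε/2) (by positivity)
      set n := max (max (k+1) t) N with hn
      have hkn : k < n :=
        lt_of_lt_of_le (Nat.lt_succ_self k) (le_trans (le_max_left _ _) (le_max_left _ _))
      have h1 : Q k (T0 (c x n) - T x) ≤ ε/2 := hN n (le_max_right _ _)
      obtain ⟨m, hm⟩ := hcU x n
      have h2 : Q k (T0 (c x n)) = P k (c x n) := hT0iso _ m hm k hk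
      have h3 : P k (x - c x n) ≤ (2⁻¹:ℝ)^n := hcP x n k hkn hk
      have hle : (2⁻¹:ℝ)^n ≤ (2⁻¹:ℝ)^t := pow_le_pow_of_le_one (by norm_num) (by norm_num)
        (le_trans (le_max_right _ _) (le_max_left _ _))
      have htr1 : P k x ≤ P k (x - c x n) + P k (c x n) := by
        calc P k x = P k ((x - c x n) + c x n) := by congr 1; abel
        _ ≤ _ := map_add_le_add _ _ _
      have htr2 : Q k (T0 (c x n)) ≤ Q k (T0 (c x n) - T x) + Q k (T x) := by
        calc Q k (T0 (c x n)) = Q k ((T0 (c x n) - T x) + T x) := by congr 1; abel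
        _ ≤ _ := map_add_le_add _ _ _
      linarith [ht.le]
  -- T is additive
  have hTadd : ∀ x y : E, T (x + y) = T x + T y := by
    intro x y
    have ha := hT (x+y)
    have hb : Stmt7.STends Q lam (fun n => T0 (c x n) + T0 (c y n)) (T x + T y) :=
      Stmt7.stends_add (hT x) (hT y)
    have hclose : ∀ k : ℕ, (k:ℕ∞) < lam → ∀ ε : ℝ, 0 < ε → ∃ N, ∀ i, N ≤ i →
        Q k (T0 (c (x+y) i) - (T0 (c x i) + T0 (c y i))) ≤ ε := by
      intro k hk ε hε
      obtain ⟨t, ht⟩ := exists_pow_lt_of_lt_one (show (0:ℝ) < ε/3 by positivity)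
        (by norm_num : (2⁻¹:ℝ) < 1)
      refine ⟨max (k+1) t, fun i hi => ?_⟩
      have hki : k < i := lt_of_lt_of_le (Nat.lt_succ_self k) (le_trans (le_max_left _ _) hi)
      have hw : T0 (c x i) + T0 (c y i) = T0 (c x i + c y i) :=
        (hT0add _ _ (hcU x i) (hcU y i)).symm
      rw [hw]
      have hQP : Q k (T0 (c (x+y) i) - T0 (c x i + c y i)) =
          P k (c (x+y) i - (c x i + c y i)) :=
        hT0dist _ _ (hcU _ i) (hUadd (hcU x i) (hcU y i)) k hk
      rw [hQP]
      have e0 : P k ((x+y) - c (x+y) i) ≤ (2⁻¹:ℝ)^i := hcP (x+y) i k hki hk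
      have e1 : P k (x - c x i) ≤ (2⁻¹:ℝ)^i := hcP x i k hki hk
      have e2 : P k (y - c y i) ≤ (2⁻¹:ℝ)^i := hcP y i k hki hk
      have htri : P k (c (x+y) i - (c x i + c y i)) ≤
          P k ((x+y) - c (x+y) i) + P k (x - c x i) + P k (y - c y i) := by
        calc P k (c (x+y) i - (c x i + c y i))
            = P k (-((x+y) - c (x+y) i) + ((x - c x i) + (y - c y i))) := by congr 1; abel
        _ ≤ P k (-((x+y) - c (x+y) i)) + P k ((x - c x i) + (y - c y i)) := map_add_le_add _ _ _
        _ ≤ P k (-((x+y) - c (x+y) i)) + (P k (x - c x i) + P k (y - c y i)) :=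
            add_le_add_right (map_add_le_add _ _ _) _
        _ = _ := by rw [map_neg_eq_map]; ring
      have hle : (2⁻¹:ℝ)^i ≤ (2⁻¹:ℝ)^t :=
        pow_le_pow_of_le_one (by norm_num) (by norm_num) (le_trans (le_max_right _ _) hi)
      linarith [ht.le]
    have h0 := Stmt7.stends_close ha hb hclose
    exact sub_eq_zero.mp (sepQ _ (fun k hk => h0 k hk))
  -- T commutes with scalars
  have hTsmul : ∀ (r : ℝ) (x : E), T (r • x) = r • T x := by
    intro r x
    have ha := hT (r • x)
    have hb : Stmt7.STends Q lam (fun n => r • T0 (c x n)) (r • T x) :=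
      Stmt7.stends_smul r (hT x)
    have hclose : ∀ k : ℕ, (k:ℕ∞) < lam → ∀ ε : ℝ, 0 < ε → ∃ N, ∀ i, N ≤ i →
        Q k (T0 (c (r • x) i) - r • T0 (c x i)) ≤ ε := by
      intro k hk ε hε
      obtain ⟨t, ht⟩ := exists_pow_lt_of_lt_one (show (0:ℝ) < ε/(|r|+2) by positivity)
        (by norm_num : (2⁻¹:ℝ) < 1)
      refine ⟨max (k+1) t, fun i hi => ?_⟩
      have hki : k < i := lt_of_lt_of_le (Nat.lt_succ_self k) (le_trans (le_max_left _ _) hi)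
      have hw : r • T0 (c x i) = T0 (r • c x i) := (hT0smul r _ (hcU x i)).symm
      rw [hw]
      have hUsm : ∃ m, r • c x i ∈ (ch m).1.1 := by
        obtain ⟨m, hm⟩ := hcU x i
        exact ⟨m, Submodule.smul_mem _ r hm⟩
      have hQP : Q k (T0 (c (r • x) i) - T0 (r • c x i)) = P k (c (r • x) i - r • c x i) :=
        hT0dist _ _ (hcU _ i) hUsm k hk
      rw [hQP]
      have e0 : P k ((r • x) - c (r • x) i) ≤ (2⁻¹:ℝ)^i := hcP (r • x) i k hki hk
      have e1 : P k (x - c x i) ≤ (2⁻¹:ℝ)^i := hcP x i k hki hk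
      have hsm : P k (r • x - r • c x i) = |r| * P k (x - c x i) := by
        rw [← smul_sub, map_smul_eq_mul, Real.norm_eq_abs]
      have htri : P k (c (r • x) i - r • c x i) ≤
          P k ((r • x) - c (r • x) i) + P k (r • x - r • c x i) := by
        calc P k (c (r • x) i - r • c x i)
            = P k (-((r • x) - c (r • x) i) + (r • x - r • c x i)) := by congr 1; abel
        _ ≤ P k (-((r • x) - c (r • x) i)) + P k (r • x - r • c x i) := map_add_le_add _ _ _
        _ = _ := by rw [map_neg_eq_map]
      have hle : (2⁻¹:ℝ)^i ≤ (2⁻¹:ℝ)^t :=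
        pow_le_pow_of_le_one (by norm_num) (by norm_num) (le_trans (le_max_right _ _) hi)
      have habs : (0:ℝ) ≤ |r| := abs_nonneg r
      have hbound : |r| * P k (x - c x i) ≤ (|r|+1) * (2⁻¹:ℝ)^t := by
        have hp0 : (0:ℝ) ≤ P k (x - c x i) := apply_nonneg _ _
        nlinarith
      have hfin : ((|r|:ℝ)+1) * (2⁻¹:ℝ)^t + (2⁻¹:ℝ)^t ≤ ε := by
        have h2 : ((|r|:ℝ)+2) * (2⁻¹:ℝ)^t ≤ (|r|+2) * (ε/(|r|+2)) := by
          have : (0:ℝ) < |r| + 2 := by positivity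
          nlinarith [ht.le]
        have h3 : ((|r|:ℝ)+2) * (ε/(|r|+2)) = ε := by field_simp
        nlinarith
      linarith
    have h0 := Stmt7.stends_close ha hb hclose
    exact sub_eq_zero.mp (sepQ _ (fun k hk => h0 k hk))
  -- package as a linear map
  set Tlin : E →ₗ[ℝ] F :=
    { toFun := T, map_add' := hTadd, map_smul' := by intro r x; simpa using hTsmul r x }
    with hTlin
  have hTlinapp : ∀ x : E, Tlin x = T x := fun x => rfl
  have hTsub : ∀ x y : E, T (x - y) = T x - T y := by
    intro x y
    have := map_sub Tlin x y
    simpa [hTlinapp] using this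
  -- injectivity
  have hTinj : Function.Injective Tlin := by
    intro x y hxy
    have h0 : T (x - y) = 0 := by
      rw [hTsub]
      rw [hTlinapp, hTlinapp] at hxy
      rw [hxy, sub_self]
    have hP0 : ∀ k : ℕ, (k:ℕ∞) < lam → P k (x - y) = 0 := by
      intro k hk
      rw [← hTiso k hk (x - y), h0, map_zero]
    exact sub_eq_zero.mp (sepP _ hP0)
  -- density of the image of T0 over the union
  have hdense : ∀ (y : F) (N : ℕ) (ε : ℝ), 0 < ε → ∃ z : E, (∃ m, z ∈ (ch m).1.1) ∧
      ∀ k < N, (k : ℕ∞) < lam → Q k (T0 z - y) ≤ ε := by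
    intro y N ε hε
    obtain ⟨mi, hmi⟩ := heF y (ε/3) (by positivity) N
    set B : ℝ := (∑ j ∈ Finset.range N, Q j y) + ε + 1 with hB
    have hsum0 : (0:ℝ) ≤ ∑ j ∈ Finset.range N, Q j y :=
      Finset.sum_nonneg (fun j _ => apply_nonneg _ _)
    have hB0 : 0 < B := by rw [hB]; linarith
    obtain ⟨t, ht⟩ := exists_pow_lt_of_lt_one (show (0:ℝ) < ε/(9*B) by positivity)
      (by norm_num : (2⁻¹:ℝ) < 1)
    set n := Nat.pair mi t with hn
    have htn : t ≤ n := Nat.right_le_pair mi t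
    obtain ⟨z, hzmem, hz⟩ := hch4 n
    rw [Nat.unpair_pair] at hz
    refine ⟨z, ⟨n+1, hzmem⟩, fun k hkN hk => ?_⟩
    have hz' := hz k hk
    have hky : Q k y ≤ ∑ j ∈ Finset.range N, Q j y :=
      Finset.single_le_sum (fun j _ => apply_nonneg _ _) (Finset.mem_range.mpr hkN)
    have hey : Q k (e mi - y) ≤ ε/3 := by
      rw [map_sub_rev]; exact (hmi k hkN hk).le
    have heB : Q k (e mi) ≤ B := by
      have htr : Q k (e mi) ≤ Q k (e mi - y) + Q k y := by
        calc Q k (e mi) = Q k ((e mi - y) + y) := by congr 1; abel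
        _ ≤ _ := map_add_le_add _ _ _
      rw [hB]; linarith
    have hQap : Q k (Stmt7.ap (ch (n+1)).1 z) ≤ Q k (e mi) + (2⁻¹:ℝ)^n * Q k (e mi) := by
      have htr : Q k (Stmt7.ap (ch (n+1)).1 z) ≤
          Q k (Stmt7.ap (ch (n+1)).1 z - e mi) + Q k (e mi) := by
        calc Q k (Stmt7.ap (ch (n+1)).1 z)
            = Q k ((Stmt7.ap (ch (n+1)).1 z - e mi) + e mi) := by congr 1; abel
        _ ≤ _ := map_add_le_add _ _ _
      linarith
    have hPz : P k z = Q k (Stmt7.ap (ch (n+1)).1 z) := (hisom (n+1) k hk z hzmem).symm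
    have hnear := hT0near (n+1) z hzmem k hk
    have hpow_le : (2⁻¹:ℝ)^n ≤ (2⁻¹:ℝ)^t :=
      pow_le_pow_of_le_one (by norm_num) (by norm_num) htn
    have hpow1 : (2⁻¹:ℝ)^n ≤ 1 := pow_le_one₀ (by norm_num) (by norm_num)
    have h2n1 : (2⁻¹:ℝ)^(n+1) ≤ (2⁻¹:ℝ)^n :=
      pow_le_pow_of_le_one (by norm_num) (by norm_num) (Nat.le_succ n)
    have hQe0 : (0:ℝ) ≤ Q k (e mi) := apply_nonneg _ _
    have hpn0 : (0:ℝ) ≤ (2⁻¹:ℝ)^n := by positivity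
    have hpt0 : (0:ℝ) ≤ (2⁻¹:ℝ)^t := by positivity
    have hpn10 : (0:ℝ) ≤ (2⁻¹:ℝ)^(n+1) := by positivity
    have hPz2 : P k z ≤ 2*B := by
      rw [hPz]; nlinarith
    have htri : Q k (T0 z - y) ≤ Q k (T0 z - Stmt7.ap (ch (n+1)).1 z) +
        Q k (Stmt7.ap (ch (n+1)).1 z - e mi) + Q k (e mi - y) := by
      calc Q k (T0 z - y) = Q k ((T0 z - Stmt7.ap (ch (n+1)).1 z) +
          ((Stmt7.ap (ch (n+1)).1 z - e mi) + (e mi - y))) := by congr 1; abel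
      _ ≤ Q k (T0 z - Stmt7.ap (ch (n+1)).1 z) +
          Q k ((Stmt7.ap (ch (n+1)).1 z - e mi) + (e mi - y)) := map_add_le_add _ _ _
      _ ≤ Q k (T0 z - Stmt7.ap (ch (n+1)).1 z) +
          (Q k (Stmt7.ap (ch (n+1)).1 z - e mi) + Q k (e mi - y)) :=
          add_le_add_right (map_add_le_add _ _ _) _
      _ = _ := by ring
    have hPz0 : (0:ℝ) ≤ P k z := apply_nonneg _ _
    have f1 : (2⁻¹:ℝ)^n * Q k (e mi) ≤ (2⁻¹:ℝ)^t * B :=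
      mul_le_mul hpow_le heB hQe0 hpt0
    have f2 : 2*(2⁻¹:ℝ)^(n+1) * P k z ≤ 4*((2⁻¹:ℝ)^t * B) := by nlinarith
    have f3 : (2⁻¹:ℝ)^t * B ≤ ε/9 := by
      have := ht.le
      calc (2⁻¹:ℝ)^t * B ≤ (ε/(9*B)) * B := by nlinarith
      _ = ε/9 := by field_simp
    linarith
  -- surjectivity
  have hTsurj : Function.Surjective Tlin := by
    intro y
    have hzseq : ∀ j : ℕ, ∃ z : E, (∃ m, z ∈ (ch m).1.1) ∧
        ∀ k < j, (k:ℕ∞) < lam → Q k (T0 z - y) ≤ (2⁻¹:ℝ)^j :=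
      fun j => hdense y j ((2⁻¹:ℝ)^j) (by positivity)
    choose zs hzU hzQ using hzseq
    have hcau : ∀ ε : ℝ, 0 < ε → ∀ k : ℕ, (k:ℕ∞) < lam →
        ∃ N, ∀ i j, N ≤ i → N ≤ j → P k (zs i - zs j) ≤ ε := by
      intro ε hε k hk
      obtain ⟨t, ht⟩ := exists_pow_lt_of_lt_one (half_pos hε) (by norm_num : (2⁻¹:ℝ) < 1)
      refine ⟨max (k+1) t, fun i j hi hj => ?_⟩
      have hki : k < i := lt_of_lt_of_le (Nat.lt_succ_self k) (le_trans (le_max_left _ _) hi)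
      have hkj : k < j := lt_of_lt_of_le (Nat.lt_succ_self k) (le_trans (le_max_left _ _) hj)
      have hQP : P k (zs i - zs j) = Q k (T0 (zs i) - T0 (zs j)) :=
        (hT0dist _ _ (hzU i) (hzU j) k hk).symm
      rw [hQP]
      have e1 : Q k (T0 (zs i) - y) ≤ (2⁻¹:ℝ)^i := hzQ i k hki hk
      have e2 : Q k (T0 (zs j) - y) ≤ (2⁻¹:ℝ)^j := hzQ j k hkj hk
      have htri : Q k (T0 (zs i) - T0 (zs j)) ≤
          Q k (T0 (zs i) - y) + Q k (T0 (zs j) - y) := by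
        calc Q k (T0 (zs i) - T0 (zs j))
            = Q k ((T0 (zs i) - y) + -(T0 (zs j) - y)) := by congr 1; abel
        _ ≤ Q k (T0 (zs i) - y) + Q k (-(T0 (zs j) - y)) := map_add_le_add _ _ _
        _ = _ := by rw [map_neg_eq_map]
      have hi' : (2⁻¹:ℝ)^i ≤ (2⁻¹:ℝ)^t :=
        pow_le_pow_of_le_one (by norm_num) (by norm_num) (le_trans (le_max_right _ _) hi)
      have hj' : (2⁻¹:ℝ)^j ≤ (2⁻¹:ℝ)^t :=
        pow_le_pow_of_le_one (by norm_num) (by norm_num) (le_trans (le_max_right _ _) hj)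
      linarith [ht.le]
    obtain ⟨x, hx⟩ := hEcomp zs hcau
    refine ⟨x, ?_⟩
    have hzero : ∀ k : ℕ, (k:ℕ∞) < lam → Q k (T x - y) = 0 := by
      intro k hk
      have hle : ∀ ε : ℝ, 0 < ε → Q k (T x - y) ≤ ε := by
        intro ε hε
        obtain ⟨N, hN⟩ := hx k hk (ε/2) (by positivity)
        obtain ⟨t, ht⟩ := exists_pow_lt_of_lt_one (half_pos hε) (by norm_num : (2⁻¹:ℝ) < 1)
        set j := max N (max (k+1) t) with hj
        have hkj : k < j := lt_of_lt_of_le (Nat.lt_succ_self k)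
          (le_trans (le_max_left _ _) (le_max_right _ _))
        have h1 : P k (zs j - x) ≤ ε/2 := hN j (le_max_left _ _)
        have h2 : Q k (T0 (zs j) - y) ≤ (2⁻¹:ℝ)^j := hzQ j k hkj hk
        have h3 : T (zs j) = T0 (zs j) := hTeq _ (hzU j)
        have h4 : Q k (T x - T (zs j)) = P k (x - zs j) := by
          rw [← hTsub]; exact hTiso k hk _
        have heq : T x - y = (T x - T (zs j)) + (T0 (zs j) - y) := by
          rw [h3]; abel
        have htri : Q k (T x - y) ≤ Q k (T x - T (zs j)) + Q k (T0 (zs j) - y) := by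
          rw [heq]; exact map_add_le_add _ _ _
        have h5 : P k (x - zs j) = P k (zs j - x) := map_sub_rev _ _ _
        have hle' : (2⁻¹:ℝ)^j ≤ (2⁻¹:ℝ)^t := pow_le_pow_of_le_one (by norm_num)
          (by norm_num) (le_trans (le_max_right _ _) (le_max_right _ _))
        rw [h4, h5] at htri
        linarith [ht.le]
      refine le_antisymm ?_ (apply_nonneg _ _)
      refine le_of_forall_pos_le_add (fun ε hε => ?_)
      simpa using hle ε hε
    have := sepQ _ hzero
    exact sub_eq_zero.mp this
  refine ⟨LinearEquiv.ofBijective Tlin ⟨hTinj, hTsurj⟩, fun k hk x => ?_⟩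
  show Q k (Tlin x) = P k x
  exact hTiso k hk x
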